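/- arXiv:1311.5217 — 6 statements merged into one kernel-verified Lean document; each statement's English description precedes it below -/
import Mathlib

section
/- Let gl^M denote the Lie algebra of ℤ≥1 × ℤ≥1 matrices over ℂ with finite rows and columns, and let I ⊆ gl^M be a Lie ideal containing a diagonal matrix D = Σ d_i E_{ii} with all d_i pairwise distinct. Then I contains every matrix in gl^M with zeros on the diagonal, and moreover I = gl^M. -/
open scoped BigOperators

/-- Matrices indexed by positive integers with finitely many nonzero entries in every
row and every column. -/
def RCFinite (X : ℕ+ → ℕ+ → ℂ) : Prop :=
  (∀ i, {j | X i j ≠ 0}.Finite) ∧ (∀ j, {i | X i j ≠ 0}.Finite)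

/-- The commutator bracket `[X,Y] = XY - YX` of two such matrices (the sums involved are
finite when `X` and `Y` are row- and column-finite). -/
noncomputable def mBracket (X Y : ℕ+ → ℕ+ → ℂ) : ℕ+ → ℕ+ → ℂ :=
  fun i j => (∑ᶠ k, X i k * Y k j) - (∑ᶠ k, Y i k * X k j)

lemma pnat_succ (n : ℕ+) (h : n ≠ 1) : ∃ k : ℕ+, n = k + 1 := by
  have h1 : (1:ℕ) ≤ (n:ℕ) := n.2
  have h2 : (n:ℕ) ≠ 1 := fun he => h (PNat.coe_injective (by simp [he]))
  refine ⟨⟨(n:ℕ) - 1, by omega⟩, PNat.coe_injective ?_⟩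
  show (n:ℕ) = ((n:ℕ) - 1) + 1
  omega

lemma pnat_succ_ne_one (k : ℕ+) : k + 1 ≠ 1 := by
  intro h
  have := congrArg (PNat.val) h
  simp [PNat.add_coe] at this

/-- Let `gl^M` be the Lie algebra of `ℤ≥1 × ℤ≥1` matrices with finite rows
and columns, and `I ⊆ gl^M` a Lie ideal containing a diagonal matrix `D = Σ dᵢ Eᵢᵢ` with
pairwise distinct entries.  Then `I` contains every matrix of `gl^M` with zero diagonal,
and `I = gl^M`. -/
theorem stmt_4 (I : Set (ℕ+ → ℕ+ → ℂ))
    (hIsub : ∀ X ∈ I, RCFinite X)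
    (hadd : ∀ X ∈ I, ∀ Y ∈ I, X + Y ∈ I)
    (hsmul : ∀ (c : ℂ), ∀ X ∈ I, c • X ∈ I)
    (hideal : ∀ X, RCFinite X → ∀ Y ∈ I, mBracket X Y ∈ I)
    (d : ℕ+ → ℂ) (hd : Function.Injective d)
    (hD : (fun i j => if i = j then d i else 0) ∈ I) :
    (∀ X, RCFinite X → (∀ i, X i i = 0) → X ∈ I) ∧ (∀ X, RCFinite X → X ∈ I) := by
  set D : ℕ+ → ℕ+ → ℂ := fun i j => if i = j then d i else 0 with hDdef
  -- bracket with the diagonal matrix D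
  have hbD : ∀ (X : ℕ+ → ℕ+ → ℂ) (i j : ℕ+),
      mBracket X D i j = X i j * (d j - d i) := by
    intro X i j
    show (∑ᶠ k, X i k * D k j) - (∑ᶠ k, D i k * X k j) = X i j * (d j - d i)
    have h1 : (∑ᶠ k, X i k * D k j) = X i j * d j := by
      rw [finsum_eq_single _ j]
      · simp [hDdef]
      · intro k hk
        simp [hDdef, hk]
    have h2 : (∑ᶠ k, D i k * X k j) = d i * X i j := by
      rw [finsum_eq_single _ i]
      · simp [hDdef]
      · intro k hk
        simp [hDdef, if_neg (Ne.symm hk)]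
    rw [h1, h2]; ring
  have part1 : ∀ X, RCFinite X → (∀ i, X i i = 0) → X ∈ I := by
    intro X hX hdiag
    set Y : ℕ+ → ℕ+ → ℂ := fun i j => if i = j then 0 else X i j / (d j - d i) with hY
    have hYsupp : ∀ i j, Y i j ≠ 0 → X i j ≠ 0 := by
      intro i j h h0
      apply h
      simp [hY, h0]
    have hYR : RCFinite Y :=
      ⟨fun i => (hX.1 i).subset fun j hj => hYsupp i j hj,
       fun j => (hX.2 j).subset fun i hi => hYsupp i j hi⟩
    have hXeq : mBracket Y D = X := by
      funext i j
      rw [hbD]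
      by_cases h : i = j
      · subst h
        simp [hY, hdiag]
      · have hne : d j - d i ≠ 0 := sub_ne_zero.mpr fun he => h (hd he).symm
        show (if i = j then 0 else X i j / (d j - d i)) * (d j - d i) = X i j
        rw [if_neg h, div_mul_cancel₀ _ hne]
    have := hideal Y hYR D hD
    rwa [hXeq] at this
  refine ⟨part1, ?_⟩
  intro X hX
  -- off-diagonal part
  set Xo : ℕ+ → ℕ+ → ℂ := fun i j => if i = j then 0 else X i j with hXo
  have hXoR : RCFinite Xo :=
    ⟨fun i => (hX.1 i).subset fun j hj => by
        intro h0; apply hj; simp [hXo, h0],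
     fun j => (hX.2 j).subset fun i hi => by
        intro h0; apply hi; simp [hXo, h0]⟩
  have hXoI : Xo ∈ I := part1 Xo hXoR (by intro i; simp [hXo])
  -- diagonal part via [A, B]
  set u : ℕ → ℂ := fun n => ∑ k ∈ Finset.range n, X ⟨k+1, k.succ_pos⟩ ⟨k+1, k.succ_pos⟩ with hu
  have hu_succ : ∀ m : ℕ+, u ((m:ℕ)+1) = u (m:ℕ) + X (m+1) (m+1) := by
    intro m
    rw [hu]
    simp only [Finset.sum_range_succ]
    congr 1
  set A : ℕ+ → ℕ+ → ℂ := fun i j => if j = i + 1 then 1 else 0 with hA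
  set B : ℕ+ → ℕ+ → ℂ := fun i j => if i = j + 1 then u (j:ℕ) else 0 with hB
  have hAR : RCFinite A := by
    constructor
    · intro i
      apply Set.Finite.subset (Set.finite_singleton (i+1))
      intro j hj
      simp only [hA, Set.mem_setOf_eq, ne_eq, ite_eq_right_iff, not_forall] at hj
      simp [hj.1]
    · intro j
      apply Set.Subsingleton.finite
      intro i1 h1 i2 h2
      simp only [hA, Set.mem_setOf_eq, ne_eq, ite_eq_right_iff, not_forall] at h1 h2
      have : i1 + 1 = i2 + 1 := h1.1 ▸ h2.1 ▸ rfl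
      exact add_right_cancel this
  have hBR : RCFinite B := by
    constructor
    · intro i
      apply Set.Subsingleton.finite
      intro j1 h1 j2 h2
      simp only [hB, Set.mem_setOf_eq, ne_eq, ite_eq_right_iff, not_forall] at h1 h2
      have : j1 + 1 = j2 + 1 := h1.1 ▸ h2.1
      exact add_right_cancel this
    · intro j
      apply Set.Finite.subset (Set.finite_singleton (j+1))
      intro i hi
      simp only [hB, Set.mem_setOf_eq, ne_eq, ite_eq_right_iff, not_forall] at hi
      simp [hi.1]
  have hBdiag : ∀ i, B i i = 0 := by
    intro i
    have : i ≠ i + 1 := by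
      intro h
      have := congrArg (PNat.val) h
      simp [PNat.add_coe] at this
    simp [hB, this]
  have hBI : B ∈ I := part1 B hBR hBdiag
  have hABI : mBracket A B ∈ I := hideal A hAR B hBI
  set Xd : ℕ+ → ℕ+ → ℂ := fun i j => if i = j then X i i else 0 with hXd
  have hABeq : mBracket A B = Xd := by
    funext i j
    show (∑ᶠ k, A i k * B k j) - (∑ᶠ k, B i k * A k j) = if i = j then X i i else 0
    have h1 : (∑ᶠ k, A i k * B k j) = B (i+1) j := by
      rw [finsum_eq_single _ (i+1)]
      · simp [hA]
      · intro k hk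
        simp [hA, hk]
    have h1' : B (i+1) j = if i = j then u (j:ℕ) else 0 := by
      show (if i + 1 = j + 1 then u (j:ℕ) else 0) = if i = j then u (j:ℕ) else 0
      by_cases h : i = j
      · rw [if_pos (by rw [h]), if_pos h]
      · rw [if_neg (fun hh => h (add_right_cancel hh)), if_neg h]
    by_cases hi1 : i = 1
    · have h2 : (∑ᶠ k, B i k * A k j) = 0 := by
        apply finsum_eq_zero_of_forall_eq_zero
        intro k
        have : i ≠ k + 1 := hi1 ▸ (pnat_succ_ne_one k).symm
        simp [hB, this]
      rw [h1, h1', h2, sub_zero]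
      subst hi1
      by_cases h : (1:ℕ+) = j
      · rw [if_pos h, if_pos h, ← h]
        show u ((1:ℕ+):ℕ) = X 1 1
        have hc : ((1:ℕ+):ℕ) = 1 := rfl
        rw [hc, hu]
        simp only [Finset.sum_range_one]
        rfl
      · rw [if_neg h, if_neg h]
    · obtain ⟨m, hm⟩ := pnat_succ i hi1
      have h2 : (∑ᶠ k, B i k * A k j) = u (m:ℕ) * (if j = m + 1 then 1 else 0) := by
        rw [finsum_eq_single _ m]
        · simp [hB, hA, hm]
        · intro k hk
          have : i ≠ k + 1 := by
            rw [hm]; intro h; exact hk (add_right_cancel h).symm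
          simp [hB, this]
      rw [h1, h1', h2]
      by_cases h : i = j
      · rw [if_pos h, if_pos h, if_pos (by rw [← h, hm])]
        have hcoe : (j:ℕ) = (m:ℕ) + 1 := by
          rw [← h, hm, PNat.add_coe, PNat.one_coe]
        rw [hcoe, hu_succ m, ← hm, h]
        ring
      · rw [if_neg h, if_neg h, if_neg (by rw [← hm]; exact fun hh => h hh.symm)]
        ring
  have hXdI : Xd ∈ I := hABeq ▸ hABI
  have hsum : X = Xd + Xo := by
    funext i j
    show X i j = Xd i j + Xo i j
    by_cases h : i = j
    · subst h; simp [hXd, hXo]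
    · simp [hXd, hXo, h]
  rw [hsum]
  exact hadd Xd hXdI Xo hXoI
end

section
/- For any matrix X = (x_{ij})_{i,j≥1} with finite rows and finite columns, there exists a strictly increasing sequence i_1 = 1 < i_2 < i_3 < ... of positive integers such that x_{ij} = 0 unless both i and j lie in the interval [i_k, i_{k+2} - 1] for some k ≥ 1. -/
/-- For any matrix `X = (x_{ij})_{i,j ≥ 1}` (indexed by positive integers)
with finite rows and finite columns, there is a strictly increasing sequence
`i_1 = 1 < i_2 < …` such that `x_{ab} = 0` unless both `a` and `b` lie in
`[i_k, i_{k+2} - 1]` (equivalently `i_k ≤ a, b < i_{k+2}`) for some `k`. -/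
theorem stmt_6 (X : ℕ+ → ℕ+ → ℂ)
    (hrow : ∀ i, {j | X i j ≠ 0}.Finite)
    (hcol : ∀ j, {i | X i j ≠ 0}.Finite) :
    ∃ s : ℕ → ℕ+, s 0 = 1 ∧ StrictMono s ∧
      ∀ a b : ℕ+, X a b ≠ 0 →
        ∃ k : ℕ, s k ≤ a ∧ a < s (k + 2) ∧ s k ≤ b ∧ b < s (k + 2) := by
  have key : ∀ n : ℕ+, ∃ m : ℕ+, n < m ∧
      ∀ a b : ℕ+, X a b ≠ 0 → (a < n → b < m) ∧ (b < n → a < m) := by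
    intro n
    have hfin : (⋃ a ∈ Set.Iio n, ({b | X a b ≠ 0} ∪ {b | X b a ≠ 0})).Finite := by
      apply Set.Finite.biUnion (Set.finite_Iio n)
      intro a _
      exact (hrow a).union (hcol a)
    obtain ⟨M, hM⟩ := hfin.bddAbove
    refine ⟨max M n + 1, ?_, ?_⟩
    · calc n ≤ max M n := le_max_right M n
        _ < max M n + 1 := PNat.lt_add_right _ _
    · intro a b hab
      constructor
      · intro ha
        have hb : b ∈ ⋃ a ∈ Set.Iio n, ({b | X a b ≠ 0} ∪ {b | X b a ≠ 0}) :=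
          Set.mem_biUnion ha (Or.inl hab)
        calc b ≤ M := hM hb
          _ ≤ max M n := le_max_left M n
          _ < max M n + 1 := PNat.lt_add_right _ _
      · intro hb
        have ha : a ∈ ⋃ a ∈ Set.Iio n, ({b | X a b ≠ 0} ∪ {b | X b a ≠ 0}) :=
          Set.mem_biUnion hb (Or.inr hab)
        calc a ≤ M := hM ha
          _ ≤ max M n := le_max_left M n
          _ < max M n + 1 := PNat.lt_add_right _ _
  choose g hg1 hg2 using key
  set s : ℕ → ℕ+ := fun k => g^[k] 1 with hs
  have hsucc : ∀ k, s (k + 1) = g (s k) := by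
    intro k
    simp [hs, Function.iterate_succ_apply']
  have hmono : StrictMono s := by
    apply strictMono_nat_of_lt_succ
    intro k
    rw [hsucc]
    exact hg1 (s k)
  have hgrow : ∀ k : ℕ, k < (s k : ℕ) := by
    intro k
    induction k with
    | zero => simp [hs]
    | succ n ih =>
      have : s n < s (n + 1) := hmono (Nat.lt_succ_self n)
      have h2 : (s n : ℕ) < (s (n+1) : ℕ) := by exact_mod_cast this
      omega
  refine ⟨s, rfl, hmono, ?_⟩
  intro a b hab
  set c : ℕ+ := min a b with hc
  have hex : ∃ k, c < s k := ⟨(c : ℕ), by exact_mod_cast hgrow (c : ℕ)⟩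
  set K := Nat.find hex with hK
  have hKlt : c < s K := Nat.find_spec hex
  have hK0 : K ≠ 0 := by
    intro h
    have : c < s 0 := h ▸ hKlt
    simp [hs] at this
  obtain ⟨k, hk⟩ := Nat.exists_eq_succ_of_ne_zero hK0
  have hkle : s k ≤ c := by
    have := Nat.find_min hex (by omega : k < K)
    push_neg at this
    exact this
  have hklt : c < s (k + 1) := by rw [hk] at hKlt; exact hKlt
  refine ⟨k, ?_, ?_, ?_, ?_⟩
  · exact hkle.trans (min_le_left a b)
  · rcases le_total a b with h | h
    · have hac : a = c := by simp [hc, min_eq_left h]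
      calc a = c := hac
        _ < s (k + 1) := hklt
        _ < s (k + 2) := hmono (Nat.lt_succ_self _)
    · have hbc : b = c := by simp [hc, min_eq_right h]
      have : b < s (k + 1) := hbc ▸ hklt
      have := (hg2 (s (k+1)) a b hab).2 this
      rw [← hsucc] at this
      exact this
  · exact hkle.trans (min_le_right a b)
  · rcases le_total b a with h | h
    · have hbc : b = c := by simp [hc, min_eq_right h]
      calc b = c := hbc
        _ < s (k + 1) := hklt
        _ < s (k + 2) := hmono (Nat.lt_succ_self _)
    · have hac : a = c := by simp [hc, min_eq_left h]
      have : a < s (k + 1) := hac ▸ hklt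
      have := (hg2 (s (k+1)) a b hab).1 this
      rw [← hsucc] at this
      exact this
end

section
/- Let k ⊆ l be Lie algebras and R an l-module on which k acts densely. Then: (a) k acts densely on any l-submodule N of R and on the quotient R/N; (b) k acts densely on the tensor power R^{⊗n} for every n ≥ 1; (c) k acts densely on the direct sum R^{⊕n} for every n ≥ 1. -/
open scoped TensorProduct

/-- `K ⊆ L` acts densely on an `L`-module `M`: any finite family of vectors can be
matched. -/
def ActsDensely (L : Type*) [LieRing L] [LieAlgebra ℂ L] (K : LieSubalgebra ℂ L)
    (M : Type*) [AddCommGroup M] [Module ℂ M] [LieRingModule L M] : Prop :=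
  ∀ (q : ℕ) (v : Fin q → M) (x : L), ∃ y ∈ K, ∀ i, ⁅y, v i⁆ = ⁅x, v i⁆

/-- Every element of a tensor power is a combination of pure tensors with components
from a finite set. -/
lemma exists_finset_span {R : Type*} [AddCommGroup R] [Module ℂ R] (n : ℕ)
    (z : ⨂[ℂ]^n R) :
    ∃ T : Finset R, z ∈ Submodule.span ℂ
      {t | ∃ v : Fin n → R, (∀ j, v j ∈ T) ∧ t = PiTensorProduct.tprod ℂ v} := by
  classical
  induction z using PiTensorProduct.induction_on with
  | smul_tprod r f =>
    refine ⟨Finset.image f Finset.univ, Submodule.smul_mem _ _ (Submodule.subset_span ?_)⟩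
    exact ⟨f, fun j => Finset.mem_image_of_mem f (Finset.mem_univ j), rfl⟩
  | add a b ha hb =>
    obtain ⟨T1, h1⟩ := ha
    obtain ⟨T2, h2⟩ := hb
    refine ⟨T1 ∪ T2, Submodule.add_mem _ (Submodule.span_mono ?_ h1)
      (Submodule.span_mono ?_ h2)⟩
    · rintro t ⟨v, hv, rfl⟩
      exact ⟨v, fun j => Finset.mem_union_left _ (hv j), rfl⟩
    · rintro t ⟨v, hv, rfl⟩
      exact ⟨v, fun j => Finset.mem_union_right _ (hv j), rfl⟩

/-- if `K ⊆ L` acts densely on an `L`-module `R`, then (a) `K` acts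
densely on every `L`-submodule `N` of `R` and on the quotient `R/N`; (b) `K` acts
densely on the tensor power `R^{⊗n}` for every `n ≥ 1` (the action on `R^{⊗n}` being
the one given by the Leibniz rule, characterised on pure tensors); (c) `K` acts densely
on the direct sum `R^{⊕n}` (componentwise action) for every `n ≥ 1`. -/
theorem stmt_11 (L : Type*) [LieRing L] [LieAlgebra ℂ L] (K : LieSubalgebra ℂ L)
    (R : Type*) [AddCommGroup R] [Module ℂ R] [LieRingModule L R] [LieModule ℂ L R]
    (hdense : ActsDensely L K R) :
    -- (a) submodules and quotients:
    (∀ N : LieSubmodule ℂ L R, ActsDensely L K N ∧ ActsDensely L K (R ⧸ N)) ∧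
    -- (b) tensor powers:
    (∀ n : ℕ, 1 ≤ n → ∀ act : L → Module.End ℂ (⨂[ℂ]^n R),
      (∀ (x : L) (v : Fin n → R),
        act x (PiTensorProduct.tprod ℂ v)
          = ∑ i : Fin n, PiTensorProduct.tprod ℂ (Function.update v i ⁅x, v i⁆)) →
      ∀ (q : ℕ) (u : Fin q → ⨂[ℂ]^n R) (x : L),
        ∃ y ∈ K, ∀ i, act y (u i) = act x (u i)) ∧
    -- (c) direct sums:
    (∀ n : ℕ, 1 ≤ n → ∀ (q : ℕ) (v : Fin q → (Fin n → R)) (x : L),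
      ∃ y ∈ K, ∀ i j, ⁅(y : L), v i j⁆ = ⁅x, v i j⁆) := by
  classical
  refine ⟨fun N => ⟨?_, ?_⟩, ?_, ?_⟩
  · -- submodule
    intro q v x
    obtain ⟨y, hyK, hy⟩ := hdense q (fun i => (v i : R)) x
    refine ⟨y, hyK, fun i => ?_⟩
    apply Subtype.ext
    simpa using hy i
  · -- quotient
    intro q v x
    have hsurj : ∀ i, ∃ r : R, LieSubmodule.Quotient.mk (N := N) r = v i := fun i =>
      Submodule.Quotient.mk_surjective _ (v i)
    choose r hr using hsurj
    obtain ⟨y, hyK, hy⟩ := hdense q r x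
    refine ⟨y, hyK, fun i => ?_⟩
    rw [← hr i]
    have h1 : ⁅(y : L), LieSubmodule.Quotient.mk (N := N) (r i)⁆
        = LieSubmodule.Quotient.mk (N := N) ⁅(y : L), r i⁆ := rfl
    have h2 : ⁅x, LieSubmodule.Quotient.mk (N := N) (r i)⁆
        = LieSubmodule.Quotient.mk (N := N) ⁅x, r i⁆ := rfl
    rw [h1, h2, hy i]
  · -- tensor powers
    intro n _ act hact q u x
    choose T hT using fun i => exists_finset_span (R := R) n (u i)
    set S : Finset R := Finset.univ.biUnion T with hS
    obtain ⟨y, hyK, hy⟩ := hdense S.card (fun i => ((S.equivFin.symm i : S) : R)) x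
    have hSbr : ∀ w ∈ S, ⁅(y : L), w⁆ = ⁅x, w⁆ := by
      intro w hw
      have := hy (S.equivFin ⟨w, hw⟩)
      simpa using this
    refine ⟨y, hyK, fun i => ?_⟩
    have hle : Submodule.span ℂ
        {t | ∃ v : Fin n → R, (∀ j, v j ∈ S) ∧ t = PiTensorProduct.tprod ℂ v}
        ≤ LinearMap.eqLocus (act y) (act x) := by
      rw [Submodule.span_le]
      rintro t ⟨v, hv, rfl⟩
      show act y _ = act x _
      rw [hact y v, hact x v]
      refine Finset.sum_congr rfl fun j _ => ?_
      rw [hSbr (v j) (hv j)]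
    have hmem : u i ∈ Submodule.span ℂ
        {t | ∃ v : Fin n → R, (∀ j, v j ∈ S) ∧ t = PiTensorProduct.tprod ℂ v} := by
      refine Submodule.span_mono ?_ (hT i)
      rintro t ⟨v, hv, rfl⟩
      exact ⟨v, fun j => Finset.mem_biUnion.2 ⟨i, Finset.mem_univ i, hv j⟩, rfl⟩
    exact hle hmem
  · -- direct sums
    intro n _ q v x
    obtain ⟨y, hyK, hy⟩ := hdense (q * n)
      (fun m => v (finProdFinEquiv.symm m).1 (finProdFinEquiv.symm m).2) x
    refine ⟨y, hyK, fun i j => ?_⟩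
    have := hy (finProdFinEquiv (i, j))
    simpa using this
end

section
/- Let V be a countable-dimensional vector space with basis {v_i}_{i≥1} and V_* = span{v_i*}. The Lie algebra j(V,V_*) of generalized Jacobi matrices — matrices J = (x_{ij})_{i,j≥1} such that x_{ij} = 0 whenever |i - j| > m_J for some bound m_J depending on J — acts densely on V ⊕ V_* as a subalgebra of gl^M(V,V_*) (the Lie algebra of matrices with finite rows and columns). That is, for any finitely many vectors u_1,...,u_n ∈ V ⊕ V_* and any X ∈ gl^M(V,V_*), there exists J ∈ j(V,V_*) with J·u_k = X·u_k for all k. -/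
open scoped BigOperators

/-- density of the Lie algebra `j(V,V_*)` of generalized Jacobi matrices
in `gl^M(V,V_*)` for countable-dimensional `V` (modelled as `ℕ →₀ ℂ`, with `V_*` the
span of the dual basis, also modelled as `ℕ →₀ ℂ`).  `gl^M(V,V_*)` consists of matrices
with finite rows and columns, acting on `V` by matrix-column multiplication
`(X·v) i = Σ_j X i j * v j` and on `V_*` by (minus) the transpose action.  For any
finitely many vectors `u_1,…,u_n ∈ V ⊕ V_*` and any `X ∈ gl^M(V,V_*)` there is a banded
matrix `J` (with `J i j = 0` whenever `|i - j| > m` for some bound `m`) acting on all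
the `u_k` exactly as `X` does. -/
theorem stmt_13 (X : ℕ → ℕ → ℂ)
    (hrow : ∀ i, {j | X i j ≠ 0}.Finite)
    (hcol : ∀ j, {i | X i j ≠ 0}.Finite)
    (n : ℕ) (u : Fin n → (ℕ →₀ ℂ) × (ℕ →₀ ℂ)) :
    ∃ J : ℕ → ℕ → ℂ,
      (∃ m : ℕ, ∀ i j : ℕ, |(i : ℤ) - (j : ℤ)| > (m : ℤ) → J i j = 0) ∧
      ∀ k : Fin n,
        (∀ i : ℕ, ∑ᶠ j, J i j * (u k).1 j = ∑ᶠ j, X i j * (u k).1 j) ∧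
        (∀ i : ℕ, ∑ᶠ j, J j i * (u k).2 j = ∑ᶠ j, X j i * (u k).2 j) := by
  classical
  set S : Finset ℕ := Finset.univ.sup (fun k => (u k).1.support ∪ (u k).2.support) with hS
  set N : ℕ := S.sup id + 1 with hNdef
  have hN : ∀ x ∈ S, x < N := fun x hx =>
    Nat.lt_succ_of_le (Finset.le_sup (f := id) hx)
  -- bounds on columns/rows meeting the first N rows/columns
  have hfin1 : (⋃ j ∈ Finset.range N, {i | X i j ≠ 0}).Finite :=
    Set.Finite.biUnion (Finset.range N).finite_toSet (fun j _ => hcol j)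
  have hfin2 : (⋃ i ∈ Finset.range N, {j | X i j ≠ 0}).Finite :=
    Set.Finite.biUnion (Finset.range N).finite_toSet (fun i _ => hrow i)
  obtain ⟨B1, hB1⟩ := hfin1.bddAbove
  obtain ⟨B2, hB2⟩ := hfin2.bddAbove
  refine ⟨fun i j => if i < N ∨ j < N then X i j else 0, ⟨max N (max B1 B2), ?_⟩, ?_⟩
  · intro i j hij
    by_contra h
    have hcases : i < N ∨ j < N := by
      by_contra hc
      push_neg at hc
      simp [hc.1.not_gt, hc.2.not_gt] at h
    have hX : X i j ≠ 0 := by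
      intro h0; exact h (by simp [h0])
    have hm : i ≤ max N (max B1 B2) ∧ j ≤ max N (max B1 B2) := by
      rcases hcases with hj | hj
      · constructor
        · exact le_max_of_le_left hj.le
        · have : j ∈ ⋃ i' ∈ Finset.range N, {j' | X i' j' ≠ 0} := by
            exact Set.mem_biUnion (Finset.mem_range.mpr hj) hX
          exact le_max_of_le_right (le_max_of_le_right (hB2 this))
      · constructor
        · have : i ∈ ⋃ j' ∈ Finset.range N, {i' | X i' j' ≠ 0} := by
            exact Set.mem_biUnion (Finset.mem_range.mpr hj) hX
          exact le_max_of_le_right (le_max_of_le_left (hB1 this))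
        · exact le_max_of_le_left hj.le
    have h1 : |(i : ℤ) - (j : ℤ)| ≤ ((max N (max B1 B2) : ℕ) : ℤ) := by
      push_cast
      rw [abs_sub_le_iff]
      constructor
      · have := hm.1
        omega
      · have := hm.2
        omega
    exact absurd hij (not_lt.mpr h1)
  · intro k
    have hmem1 : ∀ j, (u k).1 j ≠ 0 → j < N := by
      intro j hj
      apply hN
      exact Finset.le_sup (f := fun k => (u k).1.support ∪ (u k).2.support)
        (Finset.mem_univ k) (Finset.mem_union_left _ (Finsupp.mem_support_iff.mpr hj))
    have hmem2 : ∀ j, (u k).2 j ≠ 0 → j < N := by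
      intro j hj
      apply hN
      exact Finset.le_sup (f := fun k => (u k).1.support ∪ (u k).2.support)
        (Finset.mem_univ k) (Finset.mem_union_right _ (Finsupp.mem_support_iff.mpr hj))
    constructor
    · intro i
      refine finsum_congr fun j => ?_
      by_cases hv : (u k).1 j = 0
      · simp [hv]
      · simp [hmem1 j hv]
    · intro i
      refine finsum_congr fun j => ?_
      by_cases hv : (u k).2 j = 0
      · simp [hv]
      · simp [hmem2 j hv]
end

section
/- Let V be a vector space with a non-degenerate symmetric bilinear form, and suppose V = U ⊕ U* where U is countable-dimensional, both U and U* isotropic, and the form restricts to the canonical pairing between U and U*. Suppose V also carries a second symmetric bilinear form for which some basis of V is orthonormal. Then the two forms are not equivalent: there is no linear automorphism of V carrying one form to the other. (Equivalently: V has a maximal isotropic subspace of countable dimension for the first form, but every maximal isotropic subspace for an orthonormal-basis form on a space of uncountable dimension is not of countable dimension.) -/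
set_option synthInstance.maxHeartbeats 1000000
set_option maxHeartbeats 1000000


/-- The vector space `V = U ⊕ U*` for the countable-dimensional space `U = ℕ →₀ ℂ`. -/
abbrev V16 : Type := (ℕ →₀ ℂ) × Module.Dual ℂ (ℕ →₀ ℂ)

/-- The canonical non-degenerate symmetric bilinear form on `V = U ⊕ U*` extending the
pairing between `U` and `U*`, for which `U` and `U*` are isotropic. -/
noncomputable def B16 : V16 → V16 → ℂ := fun p q => p.2 q.1 + q.2 p.1

/-- the form `B16` on `V = U ⊕ U*` (U countable-dimensional, both summands
isotropic, the form restricting to the canonical pairing) is not equivalent to any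
symmetric bilinear form `B'` on `V` admitting an orthonormal basis: no linear
automorphism `g` of `V` satisfies `B' x y = B16 (g x) (g y)` for all `x, y`. -/
theorem stmt_16 (ι : Type*) [DecidableEq ι] (b : Module.Basis ι ℂ V16)
    (B' : V16 →ₗ[ℂ] V16 →ₗ[ℂ] ℂ)
    (hB'symm : ∀ x y, B' x y = B' y x)
    (hB'ortho : ∀ i j, B' (b i) (b j) = if i = j then 1 else 0) :
    ¬ ∃ g : V16 ≃ₗ[ℂ] V16, ∀ x y, B' x y = B16 (g x) (g y) := by
  classical
  rintro ⟨g, hg⟩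
  -- coefficient lemma: pairing with a basis vector reads off the coefficient
  have hcoef : ∀ (i : ι) (x : V16), B' (b i) x = b.repr x i := by
    intro i x
    have h : B' (b i) =
        (Finsupp.lapply i : (ι →₀ ℂ) →ₗ[ℂ] ℂ) ∘ₗ (b.repr : V16 →ₗ[ℂ] (ι →₀ ℂ)) := by
      apply b.ext
      intro j
      rcases eq_or_ne i j with hij | hij
      · subst hij; simp [hB'ortho]
      · simp [hB'ortho, Module.Basis.repr_self, Finsupp.single_apply, hij, Ne.symm hij]
    rw [h]; rfl
  -- the maximal isotropic subspace W = g⁻¹(U × 0)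
  set φ : (ℕ →₀ ℂ) →ₗ[ℂ] V16 :=
    g.symm.toLinearMap ∘ₗ LinearMap.inl ℂ (ℕ →₀ ℂ) (Module.Dual ℂ (ℕ →₀ ℂ)) with hφ
  set W : Submodule ℂ V16 := LinearMap.range φ with hWdef
  have hgφ : ∀ u, g (φ u) = (u, 0) := by
    intro u
    simp [hφ]
  -- maximality: anything B'-orthogonal to W lies in W
  have hmax : ∀ v : V16, (∀ w ∈ W, B' v w = 0) → v ∈ W := by
    intro v hv
    have h2 : (g v).2 = 0 := by
      apply LinearMap.ext
      intro u
      have h0 := hv (φ u) ⟨u, rfl⟩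
      rw [hg, hgφ] at h0
      simpa [B16] using h0
    refine ⟨(g v).1, ?_⟩
    have he : ((g v).1, (0 : Module.Dual ℂ (ℕ →₀ ℂ))) = g v := Prod.ext rfl h2.symm
    calc φ (g v).1 = g.symm ((g v).1, 0) := rfl
      _ = g.symm (g v) := by rw [he]
      _ = v := g.symm_apply_apply v
  -- the countable set of basis indices used by W
  set T : Set ι := ⋃ n : ℕ, (↑(b.repr (φ (Finsupp.single n 1))).support : Set ι) with hT
  have hTc : T.Countable := Set.countable_iUnion fun n => (Finset.countable_toSet _)
  have hsupp : ∀ w ∈ W, ∀ k : ι, k ∉ T → b.repr w k = 0 := by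
    rintro w ⟨u, rfl⟩ k hk
    have hzero : (Finsupp.lapply k : (ι →₀ ℂ) →ₗ[ℂ] ℂ) ∘ₗ (b.repr : V16 →ₗ[ℂ] (ι →₀ ℂ)) ∘ₗ φ
        = 0 := by
      apply Finsupp.lhom_ext
      intro n c
      have hc : Finsupp.single n c = c • Finsupp.single n (1 : ℂ) := by
        rw [Finsupp.smul_single, smul_eq_mul, mul_one]
      have hk' : b.repr (φ (Finsupp.single n 1)) k = 0 := by
        rw [← Finsupp.notMem_support_iff]
        intro hmem
        exact hk (Set.mem_iUnion.mpr ⟨n, hmem⟩)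
      rw [hc]
      simp only [map_smul, LinearMap.comp_apply, Finsupp.lapply_apply, smul_eq_mul,
        LinearMap.zero_apply]
      rw [mul_zero]
      exact mul_eq_zero_of_right c hk'
    have := congrFun (congrArg DFunLike.coe hzero) u
    simpa using this
  -- ι is uncountable
  have hrank1 : Cardinal.aleph0 ≤ Module.rank ℂ (ℕ →₀ ℂ) := by
    rw [rank_finsupp_self]
    simp
  have hrank2 : Cardinal.aleph0 < Module.rank ℂ (Module.Dual ℂ (ℕ →₀ ℂ)) := by
    have := lift_rank_lt_rank_dual (K := ℂ) (V := ℕ →₀ ℂ) hrank1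
    rw [Cardinal.lift_id] at this
    exact lt_of_le_of_lt hrank1 this
  have hrankV : Cardinal.aleph0 < Module.rank ℂ V16 := by
    have hle : Module.rank ℂ (Module.Dual ℂ (ℕ →₀ ℂ)) ≤ Module.rank ℂ V16 :=
      (LinearMap.inr ℂ (ℕ →₀ ℂ) (Module.Dual ℂ (ℕ →₀ ℂ))).rank_le_of_injective
        LinearMap.inr_injective
    exact lt_of_lt_of_le hrank2 hle
  -- pick a basis index not used by W
  obtain ⟨i, hi⟩ : ∃ i : ι, i ∉ T := by
    by_contra hcon
    push_neg at hcon
    have hcnt : Countable ι := by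
      have huniv : (Set.univ : Set ι).Countable := hTc.mono fun x _ => hcon x
      exact Set.countable_univ_iff.mp huniv
    have hr : Module.rank ℂ V16 ≤ Cardinal.aleph0 := by
      have h1 := rank_span_le (R := ℂ) (Set.range b)
      rw [b.span_eq, rank_top] at h1
      haveI : Countable ↑(Set.range ⇑b) := Set.Countable.to_subtype (Set.countable_range _)
      exact h1.trans Cardinal.mk_le_aleph0
    exact absurd hr (not_le.mpr hrankV)
  -- b i is orthogonal to W, hence in W, contradiction
  have hbiW : b i ∈ W := hmax (b i) fun w hw => by
    rw [hcoef]; exact hsupp w hw i hi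
  have hfinal := hcoef i (b i)
  rw [hB'ortho i i, if_pos rfl, hsupp (b i) hbiW i hi] at hfinal
  exact one_ne_zero hfinal
end

section
/- Let g = o(V) or sp(V) for V with a non-degenerate symmetric (resp. antisymmetric) form, and let L be a g^M-module (g^M the corresponding Mackey Lie algebra o^M(V) or sp^M(V)) such that the annihilator of every vector l ∈ L contains o^M(V_f^⊥) (resp. sp^M(V_f^⊥)) for some finite-dimensional non-degenerate subspace V_f ⊆ V. Then for every l ∈ L, g·l = g^M·l; i.e., the orbit of l under the finitary subalgebra equals its orbit under the full Mackey algebra. -/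
attribute [local instance 100] LieRing.ofAssociativeRing

/-- The Mackey Lie algebra `o^M(V)` (resp. `sp^M(V)`) of a bilinear form `B` on `V`:
all endomorphisms `X` with `B(Xv,w) + B(v,Xw) = 0`, a Lie subalgebra of `End(V)`. -/
def oM (V : Type*) [AddCommGroup V] [Module ℂ V]
    (B : V →ₗ[ℂ] V →ₗ[ℂ] ℂ) : LieSubalgebra ℂ (Module.End ℂ V) where
  carrier := {X | ∀ v w : V, B (X v) w + B v (X w) = 0}
  add_mem' := by
    intro a b ha hb v w
    simp only [LinearMap.add_apply, map_add, LinearMap.add_apply]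
    linear_combination ha v w + hb v w
  zero_mem' := by intro v w; simp
  smul_mem' := by
    intro c a ha v w
    simp only [LinearMap.smul_apply, map_smul, LinearMap.smul_apply, smul_eq_mul]
    linear_combination c * ha v w
  lie_mem' := by
    intro X Y hX hY v w
    simp only [Ring.lie_def, LinearMap.sub_apply, Module.End.mul_apply, map_sub,
      LinearMap.sub_apply]
    linear_combination hX (Y v) w - hY v (X w) - hY (X v) w + hX v (Y w)

lemma exists_proj (V : Type*) [AddCommGroup V] [Module ℂ V]
    (B : V →ₗ[ℂ] V →ₗ[ℂ] ℂ)
    (hform : (∀ v w, B v w = B w v) ∨ (∀ v w, B v w = - B w v))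
    (Vf : Submodule ℂ V) [FiniteDimensional ℂ Vf]
    (hnd' : ∀ v ∈ Vf, (∀ u ∈ Vf, B v u = 0) → v = 0) :
    ∃ π : Module.End ℂ V, (∀ v ∈ Vf, π v = v) ∧ (∀ v, π v ∈ Vf) ∧
      (∀ v w, B (π v) w = B v (π w)) := by
  -- flip-sign helper
  have hsign : ∀ v w : V, B v w = 0 ↔ B w v = 0 := by
    rcases hform with h | h
    · intro v w; rw [h]
    · intro v w; rw [h]; simp
  set M : Vf →ₗ[ℂ] Module.Dual ℂ Vf := (B.flip).compl₁₂ Vf.subtype Vf.subtype with hM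
  have hMapp : ∀ (x u : Vf), M x u = B (u : V) (x : V) := by
    intro x u; simp [hM, LinearMap.compl₁₂_apply]
  have hinj : Function.Injective M := by
    rw [← LinearMap.ker_eq_bot]
    ext x
    simp only [LinearMap.mem_ker, Submodule.mem_bot]
    constructor
    · intro hx
      have : (x : V) = 0 := by
        apply hnd' x x.2
        intro u hu
        have := congrArg (fun f => f ⟨u, hu⟩) hx
        simp only [hMapp, LinearMap.zero_apply] at this
        exact (hsign _ _).mpr this
      exact Subtype.ext this
    · rintro rfl; simp
  have hdim : Module.finrank ℂ Vf = Module.finrank ℂ (Module.Dual ℂ Vf) :=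
    Subspace.dual_finrank_eq.symm
  set e := M.linearEquivOfInjective hinj hdim with he
  set ψ : V →ₗ[ℂ] Module.Dual ℂ Vf := (B.flip).compl₂ Vf.subtype with hψ
  have hψapp : ∀ (w : V) (u : Vf), ψ w u = B (u : V) w := by
    intro w u; simp [hψ]
  set π : Module.End ℂ V := Vf.subtype ∘ₗ (e.symm.toLinearMap ∘ₗ ψ) with hπ
  have hmem : ∀ v, π v ∈ Vf := by intro v; simp [hπ]
  have h1 : ∀ (w : V) (u : Vf), B (u : V) (π w) = B (u : V) w := by
    intro w u
    have h2 : e (e.symm (ψ w)) = ψ w := e.apply_symm_apply _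
    have h3 : M (e.symm (ψ w)) = ψ w :=
      (M.linearEquivOfInjective_apply hinj hdim _).symm.trans h2
    have := congrArg (fun f => f u) h3
    simpa [hMapp, hψapp, hπ] using this
  have hfix : ∀ v ∈ Vf, π v = v := by
    intro v hv
    have hd : π v - v ∈ Vf := Vf.sub_mem (hmem v) hv
    have : π v - v = 0 := by
      apply hnd' _ hd
      intro u hu
      apply (hsign _ _).mpr
      have := h1 v ⟨u, hu⟩
      simp only [map_sub]
      simpa [sub_eq_zero] using this
    exact sub_eq_zero.mp this
  exact ⟨π, hfix, hmem, by
    intro v w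
    have ha : B (π v) (π w) = B (π v) w := h1 w ⟨π v, hmem v⟩
    have hb : B (π w) (π v) = B (π w) v := h1 v ⟨π w, hmem w⟩
    rcases hform with h | h
    · rw [← ha, h (π v) (π w), hb, ← h]
    · rw [← ha, h (π v) (π w), hb, ← h]⟩

/-- let `g^M = o^M(V)` (resp. `sp^M(V)`) for a non-degenerate symmetric
(resp. antisymmetric) form `B`, and let `g ⊆ g^M` be the finitary subalgebra
`o(V) = Λ²V` (resp. `sp(V) = S²V`) of finite-rank elements of `g^M`.  If `L` is a
`g^M`-module such that the annihilator of every `l ∈ L` contains `o^M(V_f^⊥)` (the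
elements of `g^M` vanishing on `V_f`) for some finite-dimensional non-degenerate
`V_f ⊆ V`, then `g·l = g^M·l` for every `l ∈ L`. -/
theorem stmt_19 (V : Type*) [AddCommGroup V] [Module ℂ V]
    (B : V →ₗ[ℂ] V →ₗ[ℂ] ℂ)
    (hform : (∀ v w, B v w = B w v) ∨ (∀ v w, B v w = - B w v))
    (hnd : ∀ v : V, (∀ w : V, B v w = 0) → v = 0)
    (L : Type*) [AddCommGroup L] [Module ℂ L]
    [LieRingModule (oM V B) L] [LieModule ℂ (oM V B) L]
    (hla : ∀ l : L, ∃ Vf : Submodule ℂ V, FiniteDimensional ℂ Vf ∧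
      (∀ v ∈ Vf, (∀ u ∈ Vf, B v u = 0) → v = 0) ∧
      ∀ X : oM V B, (∀ v ∈ Vf, (X : Module.End ℂ V) v = 0) → ⁅X, l⁆ = 0) :
    ∀ l : L,
      {z : L | ∃ Y : oM V B,
          FiniteDimensional ℂ (LinearMap.range (Y : Module.End ℂ V)) ∧ z = ⁅Y, l⁆}
        = {z : L | ∃ X : oM V B, z = ⁅X, l⁆} := by
  intro l
  ext z
  simp only [Set.mem_setOf_eq]
  constructor
  · rintro ⟨Y, -, rfl⟩; exact ⟨Y, rfl⟩
  · rintro ⟨X, rfl⟩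
    obtain ⟨Vf, hfd, hnd', hann⟩ := hla l
    haveI := hfd
    obtain ⟨π, hfix, hmem, hadj⟩ := exists_proj V B hform Vf hnd'
    have hX : ∀ v w, B ((X : Module.End ℂ V) v) w + B v ((X : Module.End ℂ V) w) = 0 := X.2
    set X0 : Module.End ℂ V := (X : Module.End ℂ V) with hX0
    set Y0 : Module.End ℂ V := π ∘ₗ X0 + X0 ∘ₗ π - π ∘ₗ (X0 ∘ₗ π) with hY0
    have hY0app : ∀ v, Y0 v = π (X0 v) + X0 (π v) - π (X0 (π v)) := by
      intro v; simp [hY0]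
    have hY0mem : Y0 ∈ oM V B := by
      intro v w
      rw [hY0app, hY0app]
      simp only [map_add, map_sub, LinearMap.add_apply, LinearMap.sub_apply]
      linear_combination hadj (X0 v) w - hadj (X0 (π v)) w - hadj v (X0 w) +
        hadj v (X0 (π w)) + hX v (π w) + hX (π v) w - hX (π v) (π w)
    set Y : oM V B := ⟨Y0, hY0mem⟩ with hY
    have hle : LinearMap.range Y0 ≤ Vf ⊔ Submodule.map X0 Vf := by
      rintro _ ⟨v, rfl⟩
      rw [hY0app]
      refine Submodule.sub_mem _ (Submodule.add_mem _ ?_ ?_) ?_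
      · exact Submodule.mem_sup_left (hmem _)
      · exact Submodule.mem_sup_right ⟨π v, hmem v, rfl⟩
      · exact Submodule.mem_sup_left (hmem _)
    haveI : FiniteDimensional ℂ (Submodule.map X0 Vf) := Module.Finite.map Vf X0
    haveI : FiniteDimensional ℂ (Vf ⊔ Submodule.map X0 Vf : Submodule ℂ V) :=
      Submodule.finiteDimensional_sup _ _
    have hfr : FiniteDimensional ℂ (LinearMap.range Y0) :=
      Submodule.finiteDimensional_of_le hle
    have hzero : ⁅X - Y, l⁆ = 0 := by
      apply hann
      intro v hv
      show ((X - Y : oM V B) : Module.End ℂ V) v = 0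
      have : ((X - Y : oM V B) : Module.End ℂ V) = X0 - Y0 := rfl
      rw [this, LinearMap.sub_apply, hY0app, hfix v hv]
      abel
    refine ⟨Y, hfr, ?_⟩
    have := sub_lie (X : oM V B) Y l
    rw [hzero] at this
    have h := this.symm
    rw [sub_eq_zero] at h
    exact h
end
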